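/- Let σ₁, σ₂ > 0 and let Σ₁, Σ₂ be positive definite d×d matrices. Suppose X̃ is an n×d matrix with n > d and X̃ᵀX̃ of full rank, and that σ₁² I_n + X̃ Σ₁ X̃ᵀ = σ₂² I_n + X̃ Σ₂ X̃ᵀ. Then σ₁ = σ₂ and Σ₁ = Σ₂. -/
import Mathlib


open Matrix

/-- Identifiability of variance components in a linear mixed model: if `n > d`,
`X̃ᵀX̃` has full rank, and `σ₁² Iₙ + X̃ S₁ X̃ᵀ = σ₂² Iₙ + X̃ S₂ X̃ᵀ`, then
`σ₁ = σ₂` and `S₁ = S₂`. -/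
theorem variance_components_identifiable (n d : ℕ) (hnd : d < n)
    (σ₁ σ₂ : ℝ) (hσ₁ : 0 < σ₁) (hσ₂ : 0 < σ₂)
    (S₁ S₂ : Matrix (Fin d) (Fin d) ℝ) (hS₁ : S₁.PosDef) (hS₂ : S₂.PosDef)
    (X : Matrix (Fin n) (Fin d) ℝ) (hX : IsUnit (Xᵀ * X))
    (heq : σ₁ ^ 2 • (1 : Matrix (Fin n) (Fin n) ℝ) + X * S₁ * Xᵀ
         = σ₂ ^ 2 • (1 : Matrix (Fin n) (Fin n) ℝ) + X * S₂ * Xᵀ) :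
    σ₁ = σ₂ ∧ S₁ = S₂ := by
  -- Step 1: find a nonzero v with Xᵀ *ᵥ v = 0
  have hker : ¬ Function.Injective (Xᵀ.mulVecLin) := by
    intro hinj
    have := LinearMap.finrank_le_finrank_of_injective hinj
    simp [Module.finrank_pi] at this
    omega
  obtain ⟨v, hv0, hv⟩ : ∃ v : Fin n → ℝ, Xᵀ *ᵥ v = 0 ∧ v ≠ 0 := by
    rw [← LinearMap.ker_eq_bot, LinearMap.ker_eq_bot'] at hker
    push_neg at hker
    obtain ⟨v, hv, hv0⟩ := hker
    exact ⟨v, hv, hv0⟩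
  -- Step 2: apply heq to v
  have happ := congrArg (fun M => M *ᵥ v) heq
  simp only [add_mulVec, smul_mulVec, one_mulVec, Matrix.mul_assoc,
    mulVec_mulVec] at happ
  rw [show (X * (S₁ * Xᵀ)) *ᵥ v = 0 by
      rw [← mulVec_mulVec, ← mulVec_mulVec, hv0]; simp,
    show (X * (S₂ * Xᵀ)) *ᵥ v = 0 by
      rw [← mulVec_mulVec, ← mulVec_mulVec, hv0]; simp] at happ
  simp only [add_zero] at happ
  have hsq : σ₁ ^ 2 = σ₂ ^ 2 := by
    obtain ⟨i, hi⟩ := Function.ne_iff.mp hv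
    have := congrFun happ i
    simp [Pi.smul_apply] at this
    rcases this with h | h
    · exact h
    · exact absurd h hi
  have hσ : σ₁ = σ₂ := by nlinarith
  refine ⟨hσ, ?_⟩
  -- Step 3: cancel and sandwich
  have h2 : X * S₁ * Xᵀ = X * S₂ * Xᵀ := by
    rw [hσ] at heq
    exact add_left_cancel heq
  have h3 : (Xᵀ * X) * S₁ * (Xᵀ * X) = (Xᵀ * X) * S₂ * (Xᵀ * X) := by
    have := congrArg (fun M => Xᵀ * M * X) h2
    simpa [Matrix.mul_assoc] using this
  haveI := hX.invertible
  calc S₁ = ⅟(Xᵀ * X) * ((Xᵀ * X) * S₁ * (Xᵀ * X)) * ⅟(Xᵀ * X) := by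
        rw [Matrix.mul_assoc, Matrix.mul_assoc, mul_invOf_self,
          Matrix.mul_one, ← Matrix.mul_assoc, invOf_mul_self, Matrix.one_mul]
    _ = ⅟(Xᵀ * X) * ((Xᵀ * X) * S₂ * (Xᵀ * X)) * ⅟(Xᵀ * X) := by rw [h3]
    _ = S₂ := by
        rw [Matrix.mul_assoc, Matrix.mul_assoc, mul_invOf_self,
          Matrix.mul_one, ← Matrix.mul_assoc, invOf_mul_self, Matrix.one_mul]
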